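/- Let F be a field, N a natural number, and u₀, …, u_{N−1} polynomials in F[X]. Regard F[X][Y] as polynomials in a second variable Y with coefficients in F[X], and for each i let uᵢ(Y) denote uᵢ with its variable renamed to Y (the image of uᵢ under the map of polynomials induced by the constant embedding F → F[X]). If the bivariate polynomial ∑_{i=0}^{N−1} uᵢ(Y) · X^i · uᵢ(X) is the zero element of F[X][Y] (where X^i · uᵢ(X) ∈ F[X] is viewed as a constant in Y), then uᵢ = 0 for every i. -/

import Mathlib

open Polynomial

/-- If `∑ i, uᵢ(Y) · X^i · uᵢ(X) = 0` in `F[X][Y]` (where `uᵢ(Y)` is `uᵢ` with its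
variable renamed to `Y`, and `X^i · uᵢ(X)` is viewed as a constant in `Y`), then every
`uᵢ` is zero. -/
theorem sum_bivariate_eq_zero (F : Type*) [Field F] (N : ℕ) (u : Fin N → Polynomial F)
    (h : ∑ i : Fin N, ((u i).map (Polynomial.C : F →+* Polynomial F)) *
      Polynomial.C (Polynomial.X ^ (i : ℕ) * u i) = 0) :
    ∀ i, u i = 0 := by
  classical
  by_contra hcon
  push_neg at hcon
  obtain ⟨j, hj⟩ := hcon
  set S : Finset (Fin N) := Finset.univ.filter (fun i => u i ≠ 0) with hSdef
  have hS : S.Nonempty := ⟨j, by simp [hSdef, hj]⟩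
  set f : Fin N → ℕ := fun i => (i : ℕ) + (u i).natDegree with hfdef
  set D : ℕ := S.sup f with hDdef
  set T : Finset (Fin N) := S.filter (fun i => f i = D) with hTdef
  have hT : T.Nonempty := by
    obtain ⟨i, hiS, hi⟩ := Finset.exists_mem_eq_sup S hS f
    exact ⟨i, by simp [hTdef, hiS, hi.symm]; exact hDdef.symm⟩
  set i₀ : Fin N := T.min' hT with hi₀def
  have hi₀T : i₀ ∈ T := T.min'_mem hT
  have hi₀min : ∀ i ∈ T, i₀ ≤ i := fun i hi => T.min'_le i hi
  have hu₀ : u i₀ ≠ 0 := by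
    have := hi₀T
    simp only [hTdef, hSdef, Finset.mem_filter, Finset.mem_univ, true_and] at this
    exact this.1
  have hdeg₀ : (i₀ : ℕ) + (u i₀).natDegree = D := by
    have := hi₀T
    simp only [hTdef, Finset.mem_filter] at this
    exact this.2
  set k : ℕ := (u i₀).natDegree with hkdef
  -- take coefficient of Y^k then X^D in h
  have h2 : ∑ i : Fin N, (u i).coeff k * (X ^ (i : ℕ) * u i).coeff D = 0 := by
    have := congrArg (fun P : Polynomial (Polynomial F) => (P.coeff k).coeff D) h
    simp only [Polynomial.finset_sum_coeff, Polynomial.coeff_mul_C, Polynomial.coeff_map,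
      Polynomial.coeff_C_mul, Polynomial.coeff_zero] at this
    exact this
  have hDle : D ≤ S.sup f := le_of_eq hDdef
  have key : ∑ i : Fin N, (u i).coeff k * (X ^ (i : ℕ) * u i).coeff D
      = (u i₀).coeff k * (u i₀).coeff k := by
    rw [Finset.sum_eq_single i₀]
    · congr 1
      have : D = k + (i₀ : ℕ) := by omega
      rw [this, Polynomial.coeff_X_pow_mul]
    · intro i _ hne
      by_cases hui : u i = 0
      · simp [hui]
      have hiS : i ∈ S := by simp [hSdef, hui]
      have hle : f i ≤ D := Finset.le_sup hiS
      rcases lt_or_eq_of_le hle with hlt | heq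
      · -- i + deg (u i) < D : X-coefficient is zero
        have hdeg : (X ^ (i : ℕ) * u i).natDegree = f i := by
          rw [Polynomial.natDegree_mul (pow_ne_zero _ Polynomial.X_ne_zero) hui, Polynomial.natDegree_X_pow]
        have : (X ^ (i : ℕ) * u i).coeff D = 0 :=
          Polynomial.coeff_eq_zero_of_natDegree_lt (by omega)
        simp [this]
      · -- i ∈ T, i ≠ i₀, so i₀ < i and deg (u i) < k
        have hiT : i ∈ T := by simp [hTdef, hiS, heq]
        have hlt' : i₀ < i := lt_of_le_of_ne (hi₀min i hiT) (Ne.symm hne)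
        have hlt'' : (i₀ : ℕ) < (i : ℕ) := hlt'
        have hdeglt : (u i).natDegree < k := by
          simp only [hfdef] at heq
          omega
        have : (u i).coeff k = 0 := Polynomial.coeff_eq_zero_of_natDegree_lt hdeglt
        simp [this]
    · intro hnot
      exact absurd (Finset.mem_univ i₀) hnot
  rw [key] at h2
  have : (u i₀).coeff k ≠ 0 := Polynomial.leadingCoeff_ne_zero.mpr hu₀
  exact this (by
    have := mul_self_eq_zero.mp h2
    exact this)
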